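/- Let H be a real inner product space, A a symmetric bilinear form, and suppose sequences uⁿ, Uⁿ in H and dissipations Dₙ ≥ 0 satisfy A(uⁿ⁺¹, 3uⁿ⁺¹−4uⁿ+uⁿ⁻¹) + 2⟨Uⁿ⁺¹, 3Uⁿ⁺¹−4Uⁿ+Uⁿ⁻¹⟩ = −2Dₙ for all n ≥ 1. Define Ēⁿ = (1/2)[E(uⁿ,Uⁿ) + E(uⁿ'*, Uⁿ'*)] where E(u,U) = (1/2)A(u,u)+‖U‖², uⁿ'* = 2uⁿ−uⁿ⁻¹, Uⁿ'* = 2Uⁿ−Uⁿ⁻¹. Then Ēⁿ⁺¹ = Ēⁿ − Dₙ − (1/4)A(uⁿ⁺¹−uⁿ'*, uⁿ⁺¹−uⁿ'*) − (1/2)‖Uⁿ⁺¹−Uⁿ'*‖². -/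
import Mathlib


open scoped RealInnerProductSpace

theorem stmt_13 {H : Type*} [NormedAddCommGroup H] [InnerProductSpace ℝ H]
    (A : H →ₗ[ℝ] H →ₗ[ℝ] ℝ) (hAsym : ∀ x y, A x y = A y x)
    (u U : ℕ → H) (D : ℕ → ℝ) (hD : ∀ n, 0 ≤ D n)
    (heq : ∀ n, 1 ≤ n →
      A (u (n + 1)) ((3 : ℝ) • u (n + 1) - (4 : ℝ) • u n + u (n - 1))
        + 2 * ⟪U (n + 1), (3 : ℝ) • U (n + 1) - (4 : ℝ) • U n + U (n - 1)⟫ = -2 * D n)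
    (E : H → H → ℝ) (hE : ∀ v V, E v V = (1 / 2) * A v v + ‖V‖ ^ 2)
    (Ebar : ℕ → ℝ)
    (hEbar : ∀ n, Ebar n = (1 / 2) * (E (u n) (U n)
        + E ((2 : ℝ) • u n - u (n - 1)) ((2 : ℝ) • U n - U (n - 1)))) :
    ∀ n, 1 ≤ n →
      Ebar (n + 1) = Ebar n - D n
        - (1 / 4) * A (u (n + 1) - ((2 : ℝ) • u n - u (n - 1)))
            (u (n + 1) - ((2 : ℝ) • u n - u (n - 1)))
        - (1 / 2) * ‖U (n + 1) - ((2 : ℝ) • U n - U (n - 1))‖ ^ 2 := by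
  intro n hn
  have h := heq n hn
  have hni : ∀ x : H, ‖x‖ ^ 2 = ⟪x, x⟫ := fun x => (real_inner_self_eq_norm_sq x).symm
  simp only [hEbar, hE, Nat.add_sub_cancel, hni, map_add, map_sub, map_smul,
    LinearMap.add_apply, LinearMap.sub_apply, LinearMap.smul_apply, smul_eq_mul,
    inner_add_left, inner_sub_left, inner_add_right, inner_sub_right,
    inner_smul_left, inner_smul_right, RCLike.ofReal_real_eq_id, id, starRingEnd_apply, star_trivial] at h ⊢
  linear_combination (1/2) * h + hAsym (u (n + 1)) (u n) -
    (1/4) * hAsym (u (n + 1)) (u (n - 1)) +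
    (-2) * real_inner_comm (U (n + 1)) (U n) +
    (1/2) * real_inner_comm (U (n + 1)) (U (n - 1))
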